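/- Let (T t)_{t≥0} be a C₀-semigroup on a separable complex Banach space B. Define B₀ = {f ∈ B : T t f → 0 as t → ∞} and B_∞ = {f ∈ B : for every ε > 0 there exist g ∈ B and t ≥ 0 with ‖g‖ < ε and ‖T t g − f‖ < ε}. If both B₀ and B_∞ are dense in B, then T is hypercyclic, i.e. there exists f ∈ B whose orbit {T t f : t ≥ 0} is dense in B. -/

import Mathlib

/-- **Desch–Schappacher–Webb hypercyclicity criterion.** If for a C₀-semigroup on a
separable complex Banach space both the set `B₀` of points whose orbit tends to `0` and
the set `B_∞` of points approximately reachable from arbitrarily small initial data are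
dense, then the semigroup is hypercyclic. -/
theorem dsw_hypercyclicity_criterion
    {B : Type*} [NormedAddCommGroup B] [NormedSpace ℂ B] [CompleteSpace B]
    [TopologicalSpace.SeparableSpace B]
    (T : ℝ → B →L[ℂ] B)
    (hT0 : T 0 = 1)
    (hTadd : ∀ s t : ℝ, 0 ≤ s → 0 ≤ t → T (s + t) = (T s).comp (T t))
    (hTcont : ∀ g : B, ContinuousOn (fun t => T t g) (Set.Ici (0 : ℝ)))
    (h₀ : Dense {f : B | Filter.Tendsto (fun t => T t f) Filter.atTop (nhds 0)})
    (hInfty : Dense {f : B | ∀ ε : ℝ, 0 < ε →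
        ∃ g : B, ∃ t : ℝ, 0 ≤ t ∧ ‖g‖ < ε ∧ ‖T t g - f‖ < ε}) :
    ∃ f : B, Dense ((fun t => T t f) '' Set.Ici (0 : ℝ)) := by
  -- dispose of the trivial (subsingleton) case
  rcases subsingleton_or_nontrivial B with htriv | hnt
  · refine ⟨0, by
      have : (fun t => T t 0) '' Set.Ici (0 : ℝ) = Set.univ :=
        Set.eq_univ_of_forall fun x => ⟨0, Set.self_mem_Ici, Subsingleton.elim _ _⟩
      rw [this]; exact dense_univ⟩
  -- the open sets `O U` of points whose orbit meets `U`
  set O : Set B → Set B := fun U => ⋃ t ∈ Set.Ici (0 : ℝ), (T t) ⁻¹' U with hO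
  have hOopen : ∀ U : Set B, IsOpen U → IsOpen (O U) :=
    fun U hU => isOpen_biUnion fun t _ => hU.preimage (T t).continuous
  -- main step: each `O U` is dense when `U` is open and nonempty
  have hOdense : ∀ U : Set B, IsOpen U → U.Nonempty → Dense (O U) := by
    intro U hU hUne
    rw [dense_iff_inter_open]
    intro V hV hVne
    obtain ⟨v, hv⟩ := hVne
    obtain ⟨δ, hδ, hδV⟩ := Metric.isOpen_iff.mp hV v hv
    -- find a nonzero point of `U`
    obtain ⟨y, hyU, hy0⟩ : ∃ y ∈ U, y ≠ 0 := by
      obtain ⟨y₀, hy₀⟩ := hUne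
      by_cases h : y₀ = 0
      · obtain ⟨ρ, hρ, hρU⟩ := Metric.isOpen_iff.mp hU y₀ hy₀
        obtain ⟨z, hz⟩ := exists_ne (0 : B)
        have hznorm : (0:ℝ) < ‖z‖ := norm_pos_iff.mpr hz
        refine ⟨(ρ / (2 * ‖z‖)) • z, hρU ?_, ?_⟩
        · rw [Metric.mem_ball, dist_eq_norm, h, sub_zero, norm_smul]
          rw [Real.norm_eq_abs, abs_of_pos (by positivity)]
          have hkey : ρ / (2 * ‖z‖) * ‖z‖ = ρ / 2 := by field_simp
          rw [hkey]; linarith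
        · exact smul_ne_zero (by positivity) hz
      · exact ⟨y₀, hy₀, h⟩
    obtain ⟨r, hr, hrU⟩ := Metric.isOpen_iff.mp hU y hyU
    have hynorm : (0:ℝ) < ‖y‖ := norm_pos_iff.mpr hy0
    -- pick `f₀` near `v` with orbit tending to `0`
    obtain ⟨f₀, hf₀mem, hf₀v⟩ := h₀.exists_dist_lt v (half_pos hδ)
    -- pick `y' ∈ B∞` near `y`, necessarily nonzero
    have hη : (0:ℝ) < min (r/4) (‖y‖/2) := lt_min (by linarith) (by linarith)
    obtain ⟨y', hy'mem, hy'y⟩ := hInfty.exists_dist_lt y hη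
    have hy'y4 : dist y y' < r/4 := lt_of_lt_of_le hy'y (min_le_left _ _)
    have hy'0 : y' ≠ 0 := by
      intro h
      rw [h, dist_zero_right] at hy'y
      have := lt_of_lt_of_le hy'y (min_le_right _ _)
      linarith
    have hy'norm : (0:ℝ) < ‖y'‖ := norm_pos_iff.mpr hy'0
    -- choose `M` so that `‖T t f₀‖ < r/4` for `t ≥ M`
    have htend : ∀ᶠ t in Filter.atTop, ‖T t f₀‖ < r/4 := by
      have := NormedAddCommGroup.tendsto_nhds_zero.mp hf₀mem (r/4) (by linarith)
      exact this
    obtain ⟨M₀, hM₀⟩ := Filter.eventually_atTop.mp htend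
    set M : ℝ := max M₀ 0 with hM
    -- uniform bound for `‖T t‖` on `[0, M]` via Banach–Steinhaus
    obtain ⟨C, hC⟩ : ∃ C, ∀ i : Set.Icc (0:ℝ) M, ‖T i.1‖ ≤ C := by
      apply banach_steinhaus
      intro x
      obtain ⟨c, hc⟩ := (isCompact_Icc (a := (0:ℝ)) (b := M)).exists_bound_of_continuousOn
        ((hTcont x).mono (Set.Icc_subset_Ici_self))
      exact ⟨c, fun i => hc i.1 i.2⟩
    have hC0 : (0:ℝ) ≤ C := le_trans (norm_nonneg _) (hC ⟨0, le_refl 0, le_max_right _ _⟩)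
    -- apply the `B∞` property of `y'` with a small `ε`
    set ε : ℝ := min (min (δ/2) (r/4)) (‖y'‖ / (2 * (C + 1))) with hε
    have hεpos : 0 < ε := lt_min (lt_min (by linarith) (by linarith)) (by positivity)
    obtain ⟨g, t, ht0, hgnorm, hTg⟩ := hy'mem ε hεpos
    have hεδ : ε ≤ δ/2 := le_trans (min_le_left _ _) (min_le_left _ _)
    have hεr : ε ≤ r/4 := le_trans (min_le_left _ _) (min_le_right _ _)
    have hεy' : ε ≤ ‖y'‖ / (2 * (C + 1)) := min_le_right _ _
    -- the time `t` must be at least `M`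
    have htM : M ≤ t := by
      by_contra h
      push_neg at h
      have hmem : t ∈ Set.Icc (0:ℝ) M := ⟨ht0, le_of_lt h⟩
      have h1 : ‖T t g‖ ≤ C * ε :=
        le_trans ((T t).le_opNorm g)
          (mul_le_mul (hC ⟨t, hmem⟩) (le_of_lt hgnorm) (norm_nonneg _) hC0)
      have h2 : ‖y'‖ ≤ ‖T t g - y'‖ + ‖T t g‖ := by
        have := norm_sub_le (T t g - y') (T t g)
        simpa using this
      have h3 : ‖y'‖ < ε + C * ε := by linarith
      have h5 : (C + 1) * ε ≤ (C + 1) * (‖y'‖ / (2 * (C + 1))) :=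
        mul_le_mul_of_nonneg_left hεy' (by linarith)
      have h6 : (C + 1) * (‖y'‖ / (2 * (C + 1))) = ‖y'‖ / 2 := by
        field_simp
      nlinarith [h3, h5, h6]
    -- the hypercyclic-candidate point
    refine ⟨f₀ + g, hδV ?_, ?_⟩
    · rw [Metric.mem_ball, dist_eq_norm]
      calc ‖f₀ + g - v‖ ≤ ‖f₀ - v‖ + ‖g‖ := by
            have := norm_add_le (f₀ - v) g; simpa [sub_add_eq_add_sub] using this
        _ < δ/2 + δ/2 := by
            rw [dist_comm, dist_eq_norm] at hf₀v
            exact add_lt_add hf₀v (lt_of_lt_of_le hgnorm hεδ)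
        _ = δ := by ring
    · refine Set.mem_biUnion (show t ∈ Set.Ici (0:ℝ) from ht0) ?_
      show T t (f₀ + g) ∈ U
      apply hrU
      rw [Metric.mem_ball, dist_eq_norm, map_add]
      have hbound : ‖T t f₀‖ < r/4 := hM₀ t (le_trans (le_max_left _ _) htM)
      calc ‖T t f₀ + T t g - y‖ = ‖T t f₀ + (T t g - y' + (y' - y))‖ := by
            rw [show T t f₀ + T t g - y = T t f₀ + (T t g - y' + (y' - y)) by abel]
        _ ≤ ‖T t f₀‖ + (‖T t g - y'‖ + ‖y' - y‖) :=
            le_trans (norm_add_le _ _) (by gcongr; exact norm_add_le _ _)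
        _ < r/4 + (r/4 + r/4) := by
            have h1 : ‖T t g - y'‖ < r/4 := lt_of_lt_of_le hTg hεr
            have h2 : ‖y' - y‖ < r/4 := by
              rw [← dist_eq_norm, dist_comm]; exact hy'y4
            exact add_lt_add hbound (add_lt_add h1 h2)
        _ < r := by linarith
  -- Baire category: intersect over a countable basis
  obtain ⟨b, hbc, hbne, hbbasis⟩ := TopologicalSpace.exists_countable_basis B
  have hdense : Dense (⋂ U ∈ b, O U) := by
    apply dense_biInter_of_isOpen
    · intro U hUb; exact hOopen U (hbbasis.isOpen hUb)
    · exact hbc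
    · intro U hUb
      exact hOdense U (hbbasis.isOpen hUb) (Set.nonempty_iff_ne_empty.mpr
        (fun h => hbne (h ▸ hUb)))
  obtain ⟨f, hf⟩ := hdense.nonempty
  refine ⟨f, hbbasis.dense_iff.mpr fun U hUb hUne => ?_⟩
  have := Set.mem_iInter₂.mp hf U hUb
  obtain ⟨t, ht, hTt⟩ := Set.mem_iUnion₂.mp this
  exact ⟨T t f, hTt, ⟨t, ht, rfl⟩⟩
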